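/- Let n ≥ 1 and let R_1, …, R_n be i.i.d. exponential random variables with rate 1. Then: (i) for every x in the probability simplex Δ_n and every i with x_i > 0, P[ R_i/x_i < R_j/x_j for all j ≠ i with x_j > 0 ] = x_i; and (ii) for all x, y ∈ Δ_n, P[ there exists an index i with x_i > 0 and y_i > 0 such that R_i/x_i < R_j/x_j for all j ≠ i with x_j > 0 and R_i/y_i < R_j/y_j for all j ≠ i with y_j > 0 ] ≥ 1 − Σ_j |x_j − y_j|. -/

import Mathlib

open MeasureTheory ProbabilityTheory
open scoped ENNReal

/-- `x ∈ Δ_n`: all coordinates in `[0,1]` and the coordinates sum to `1`. -/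
def memSimplex (n : ℕ) (x : Fin n → ℝ) : Prop :=
  (∀ i, 0 ≤ x i ∧ x i ≤ 1) ∧ ∑ i, x i = 1

set_option linter.unusedSectionVars false
set_option linter.unusedVariables false

lemma aux_lintegral_exp {c : ℝ} (hc : 0 ≤ c) :
    ∫⁻ r, ENNReal.ofReal (Real.exp (-(c * r))) ∂(expMeasure 1)
      = ENNReal.ofReal (1 / (1 + c)) := by
  have h1c : (0:ℝ) < 1 + c := by linarith
  have hme : expMeasure 1 = volume.withDensity (exponentialPDF 1) := rfl
  have hg : Measurable fun r : ℝ => ENNReal.ofReal (Real.exp (-(c * r))) :=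
    (Real.measurable_exp.comp ((measurable_id.const_mul c).neg)).ennreal_ofReal
  have hpdf : Measurable (exponentialPDF 1) :=
    (measurable_exponentialPDFReal 1).ennreal_ofReal
  rw [hme, lintegral_withDensity_eq_lintegral_mul _ hpdf hg]
  have heq : (exponentialPDF 1 * fun r => ENNReal.ofReal (Real.exp (-(c * r))))
      = Set.indicator (Set.Ici (0:ℝ)) (fun r => ENNReal.ofReal (Real.exp (-((1 + c) * r)))) := by
    funext r
    by_cases hr : 0 ≤ r
    · rw [Set.indicator_of_mem (Set.mem_Ici.mpr hr)]
      simp only [Pi.mul_apply, exponentialPDF_of_nonneg hr]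
      rw [← ENNReal.ofReal_mul (by positivity)]
      congr 1
      rw [one_mul, ← Real.exp_add]
      ring_nf
    · rw [Set.indicator_of_notMem (by simpa using hr)]
      simp only [Pi.mul_apply, exponentialPDF_of_neg (lt_of_not_ge hr), zero_mul]
  rw [heq, lintegral_indicator measurableSet_Ici,
    setLIntegral_congr (Filter.EventuallyEq.symm Ioi_ae_eq_Ici)]
  have hint : IntegrableOn (fun r : ℝ => Real.exp (-((1 + c) * r))) (Set.Ioi 0) := by
    have := exp_neg_integrableOn_Ioi 0 h1c
    simpa only [neg_mul] using this
  rw [← ofReal_integral_eq_lintegral_ofReal hint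
    (Filter.Eventually.of_forall fun r => (Real.exp_pos _).le)]
  congr 1
  have := integral_comp_mul_left_Ioi (fun u : ℝ => Real.exp (-u)) 0 h1c
  simp only [mul_zero, smul_eq_mul] at this
  rw [this, integral_exp_neg_Ioi, neg_zero, Real.exp_zero, mul_one, one_div]

variable {n : ℕ} {Ω : Type} [MeasurableSpace Ω] {μ : Measure Ω} [IsProbabilityMeasure μ]
  {R : Fin n → Ω → ℝ}

lemma aux_null (hexp : ∀ (i : Fin n) (t : ℝ), 0 ≤ t →
      μ {ω | R i ω ≤ t} = ENNReal.ofReal (1 - Real.exp (-t))) (j : Fin n) :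
    μ {ω | R j ω ≤ 0} = 0 := by
  rw [hexp j 0 le_rfl]; simp

lemma aux_tail (hexp : ∀ (i : Fin n) (t : ℝ), 0 ≤ t →
      μ {ω | R i ω ≤ t} = ENNReal.ofReal (1 - Real.exp (-t)))
    (hmeas : ∀ i, Measurable (R i)) (j : Fin n) {t : ℝ} (ht : 0 ≤ t) :
    μ {ω | t < R j ω} = ENNReal.ofReal (Real.exp (-t)) := by
  have hset : {ω | t < R j ω} = {ω | R j ω ≤ t}ᶜ := by ext ω; simp [not_le]
  have hms : MeasurableSet {ω | R j ω ≤ t} := (hmeas j) measurableSet_Iic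
  have h01 : 0 ≤ 1 - Real.exp (-t) := by
    have : Real.exp (-t) ≤ 1 := Real.exp_le_one_iff.mpr (by linarith)
    linarith
  rw [hset, measure_compl hms (measure_ne_top μ _), hexp j t ht, measure_univ,
    ← ENNReal.ofReal_one, ← ENNReal.ofReal_sub _ h01]
  congr 1
  ring

lemma aux_map (hexp : ∀ (i : Fin n) (t : ℝ), 0 ≤ t →
      μ {ω | R i ω ≤ t} = ENNReal.ofReal (1 - Real.exp (-t)))
    (hmeas : ∀ i, Measurable (R i)) (i : Fin n) :
    μ.map (R i) = expMeasure 1 := by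
  have hprob : IsProbabilityMeasure (μ.map (R i)) :=
    Measure.isProbabilityMeasure_map (hmeas i).aemeasurable
  refine Measure.ext_of_Iic _ _ (fun t => ?_)
  rw [Measure.map_apply (hmeas i) measurableSet_Iic]
  have hme : expMeasure 1 = volume.withDensity (exponentialPDF 1) := rfl
  rw [show R i ⁻¹' Set.Iic t = {ω | R i ω ≤ t} from rfl, hme,
    withDensity_apply _ measurableSet_Iic, lintegral_exponentialPDF_eq_antiDeriv one_pos t]
  by_cases ht : 0 ≤ t
  · rw [hexp i t ht, if_pos ht, one_mul]
  · rw [if_neg ht, ENNReal.ofReal_zero]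
    refine le_antisymm ?_ zero_le
    calc μ {ω | R i ω ≤ t} ≤ μ {ω | R i ω ≤ 0} :=
          measure_mono (fun ω h => le_trans h (le_of_lt (lt_of_not_ge ht)))
    _ = 0 := aux_null hexp i

set_option linter.unusedSectionVars false

lemma key (hmeas : ∀ i, Measurable (R i))
    (hindep : iIndepFun R μ)
    (hexp : ∀ (i : Fin n) (t : ℝ), 0 ≤ t →
      μ {ω | R i ω ≤ t} = ENNReal.ofReal (1 - Real.exp (-t)))
    (i : Fin n) (d : Fin n → ℝ) (hd : ∀ j, 0 ≤ d j) :
    μ {ω | ∀ j, j ≠ i → d j * R i ω < R j ω}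
      = ENNReal.ofReal (1 / (1 + ∑ j ∈ Finset.univ.erase i, d j)) := by
  classical
  set T : Finset (Fin n) := Finset.univ.erase i with hT
  set W : Ω → (T → ℝ) := fun ω j => R j.1 ω with hW
  have hWmeas : Measurable W := measurable_pi_lambda _ fun j => hmeas j.1
  have hIndep : IndepFun (R i) W μ := by
    have h := hindep.indepFun_finset {i} T
      (by simp [Finset.disjoint_left, hT]) hmeas
    have h2 := h.comp (φ := fun v : (({i} : Finset (Fin n)) → ℝ) =>
      v ⟨i, Finset.mem_singleton_self i⟩) (ψ := id)
      (measurable_pi_apply (X := fun _ : ({i} : Finset (Fin n)) => ℝ) (⟨i, Finset.mem_singleton_self i⟩ : ({i} : Finset (Fin n)))) measurable_id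
    exact h2
  haveI : IsProbabilityMeasure (μ.map W) := Measure.isProbabilityMeasure_map hWmeas.aemeasurable
  have hWlaw : μ.map (fun ω => (R i ω, W ω)) = (μ.map (R i)).prod (μ.map W) :=
    (indepFun_iff_map_prod_eq_prod_map_map (hmeas i).aemeasurable hWmeas.aemeasurable).mp hIndep
  set S : Set (ℝ × (T → ℝ)) := {p | ∀ j : T, d j.1 * p.1 < p.2 j} with hS
  have hSmeas : MeasurableSet S := by
    have : S = ⋂ j : T, {p : ℝ × (T → ℝ) | d j.1 * p.1 < p.2 j} := by
      ext p; simp [hS, Set.mem_iInter]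
    rw [this]
    exact MeasurableSet.iInter fun j =>
      measurableSet_lt (measurable_fst.const_mul _) ((measurable_pi_apply j).comp measurable_snd)
  have hev : {ω | ∀ j, j ≠ i → d j * R i ω < R j ω} = (fun ω => (R i ω, W ω)) ⁻¹' S := by
    ext ω
    simp only [Set.mem_setOf_eq, Set.mem_preimage, hS]
    constructor
    · intro h j; exact h j.1 (Finset.ne_of_mem_erase j.2)
    · intro h j hj; exact h ⟨j, Finset.mem_erase.mpr ⟨hj, Finset.mem_univ j⟩⟩
  rw [hev, ← Measure.map_apply ((hmeas i).prodMk hWmeas) hSmeas, hWlaw,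
    Measure.prod_apply hSmeas]
  set c := ∑ j ∈ T, d j with hc
  have hc0 : 0 ≤ c := Finset.sum_nonneg fun j _ => hd j
  have hfib : ∀ r : ℝ, 0 ≤ r →
      (μ.map W) (Prod.mk r ⁻¹' S) = ENNReal.ofReal (Real.exp (-(c * r))) := by
    intro r hr
    rw [Measure.map_apply hWmeas (hSmeas.preimage measurable_prodMk_left)]
    have hpre : W ⁻¹' (Prod.mk r ⁻¹' S) = ⋂ j ∈ T, (R j ⁻¹' Set.Ioi (d j * r)) := by
      ext ω
      simp only [Set.mem_preimage, Set.mem_setOf_eq, hS, Set.mem_iInter, Set.mem_Ioi, hW]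
      exact ⟨fun h j hj => h ⟨j, hj⟩, fun h j => h j.1 j.2⟩
    rw [hpre, hindep.meas_biInter (fun j _ => ⟨Set.Ioi (d j * r), measurableSet_Ioi, rfl⟩)]
    have hterm : ∀ j ∈ T, μ (R j ⁻¹' Set.Ioi (d j * r))
        = ENNReal.ofReal (Real.exp (-(d j * r))) := fun j _ =>
      aux_tail hexp hmeas j (mul_nonneg (hd j) hr)
    rw [Finset.prod_congr rfl hterm,
      ← ENNReal.ofReal_prod_of_nonneg (fun j _ => (Real.exp_pos _).le)]
    congr 1
    rw [← Real.exp_sum]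
    congr 1
    rw [hc, Finset.sum_mul, ← Finset.sum_neg_distrib]
  have hnull : (μ.map (R i)) (Set.Iio 0) = 0 := by
    rw [Measure.map_apply (hmeas i) measurableSet_Iio]
    refine le_antisymm ?_ zero_le
    calc μ (R i ⁻¹' Set.Iio 0) ≤ μ {ω | R i ω ≤ 0} :=
          measure_mono (fun ω (h : R i ω < 0) => le_of_lt h)
      _ = 0 := aux_null hexp i
  have hae : (fun r => (μ.map W) (Prod.mk r ⁻¹' S))
      =ᵐ[μ.map (R i)] fun r => ENNReal.ofReal (Real.exp (-(c * r))) := by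
    refine measure_mono_null (fun r hr => ?_) hnull
    simp only [Set.mem_setOf_eq] at hr
    exact lt_of_not_ge fun h0 => hr (hfib r h0)
  rw [lintegral_congr_ae hae, aux_map hexp hmeas i, aux_lintegral_exp hc0]

lemma hmul_aux {cc dd a b : ℝ} (h : 0 < dd) (hlt : cc / dd * a < b) : cc * a < b * dd := by
  have h2 := mul_lt_mul_of_pos_right hlt h
  rwa [div_mul_eq_mul_div, div_mul_cancel₀ _ h.ne'] at h2

lemma keyPos (hmeas : ∀ i, Measurable (R i))
    (hindep : iIndepFun R μ)
    (hexp : ∀ (i : Fin n) (t : ℝ), 0 ≤ t →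
      μ {ω | R i ω ≤ t} = ENNReal.ofReal (1 - Real.exp (-t)))
    (i : Fin n) (d : Fin n → ℝ) (hd : ∀ j, 0 ≤ d j) :
    μ {ω | 0 < R i ω ∧ ∀ j, j ≠ i → d j * R i ω < R j ω}
      = ENNReal.ofReal (1 / (1 + ∑ j ∈ Finset.univ.erase i, d j)) := by
  rw [← key hmeas hindep hexp i d hd]
  refine le_antisymm (measure_mono fun ω h => h.2) ?_
  calc μ {ω | ∀ j, j ≠ i → d j * R i ω < R j ω}
      ≤ μ ({ω | 0 < R i ω ∧ ∀ j, j ≠ i → d j * R i ω < R j ω} ∪ {ω | R i ω ≤ 0}) := by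
        refine measure_mono fun ω h => ?_
        by_cases h0 : 0 < R i ω
        · exact Or.inl ⟨h0, h⟩
        · exact Or.inr (le_of_not_gt h0)
    _ ≤ μ {ω | 0 < R i ω ∧ ∀ j, j ≠ i → d j * R i ω < R j ω} + μ {ω | R i ω ≤ 0} :=
        measure_union_le _ _
    _ = μ {ω | 0 < R i ω ∧ ∀ j, j ≠ i → d j * R i ω < R j ω} := by
        rw [aux_null hexp i, add_zero]

lemma part1 (hmeas : ∀ i, Measurable (R i))
    (hindep : iIndepFun R μ)
    (hexp : ∀ (i : Fin n) (t : ℝ), 0 ≤ t →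
      μ {ω | R i ω ≤ t} = ENNReal.ofReal (1 - Real.exp (-t)))
    (x : Fin n → ℝ) (hx : memSimplex n x) (i : Fin n) (hxi : 0 < x i) :
    μ {ω | ∀ j : Fin n, j ≠ i → 0 < x j → R i ω / x i < R j ω / x j}
      = ENNReal.ofReal (x i) := by
  classical
  set d : Fin n → ℝ := fun j => x j / x i with hdd
  have hd : ∀ j, 0 ≤ d j := fun j => div_nonneg (hx.1 j).1 hxi.le
  have hkey := key hmeas hindep hexp i d hd
  have hsub : {ω | ∀ j, j ≠ i → d j * R i ω < R j ω}
      ⊆ {ω | ∀ j : Fin n, j ≠ i → 0 < x j → R i ω / x i < R j ω / x j} := by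
    intro ω h j hj hxj
    have h1 := h j hj
    have h2 := hmul_aux hxi h1
    rw [div_lt_div_iff₀ hxi hxj]
    linarith
  have hsup : {ω | ∀ j : Fin n, j ≠ i → 0 < x j → R i ω / x i < R j ω / x j}
      ⊆ {ω | ∀ j, j ≠ i → d j * R i ω < R j ω} ∪ ⋃ j, {ω | R j ω ≤ 0} := by
    intro ω h
    by_cases hE : ∀ j, j ≠ i → d j * R i ω < R j ω
    · exact Or.inl hE
    · push_neg at hE
      obtain ⟨j, hj, hge⟩ := hE
      right
      refine Set.mem_iUnion.mpr ⟨j, ?_⟩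
      by_cases hxj : 0 < x j
      · exfalso
        have h1 := h j hj hxj
        rw [div_lt_div_iff₀ hxi hxj] at h1
        have h2 : x j / x i * R i ω * x i = x j * R i ω := by field_simp
        nlinarith [mul_le_mul_of_nonneg_right hge hxi.le]
      · have hx0 : x j = 0 := le_antisymm (le_of_not_gt hxj) (hx.1 j).1
        simp only [hdd, hx0, zero_div, zero_mul] at hge
        exact hge
  have hμeq : μ {ω | ∀ j : Fin n, j ≠ i → 0 < x j → R i ω / x i < R j ω / x j}
      = μ {ω | ∀ j, j ≠ i → d j * R i ω < R j ω} := by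
    refine le_antisymm ?_ (measure_mono hsub)
    calc μ {ω | ∀ j : Fin n, j ≠ i → 0 < x j → R i ω / x i < R j ω / x j}
        ≤ μ ({ω | ∀ j, j ≠ i → d j * R i ω < R j ω} ∪ ⋃ j, {ω | R j ω ≤ 0}) :=
          measure_mono hsup
      _ ≤ μ {ω | ∀ j, j ≠ i → d j * R i ω < R j ω} + μ (⋃ j, {ω | R j ω ≤ 0}) :=
          measure_union_le _ _
      _ = μ {ω | ∀ j, j ≠ i → d j * R i ω < R j ω} := by
          rw [measure_iUnion_null (fun j => aux_null hexp j), add_zero]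
  rw [hμeq, hkey]
  congr 1
  have hsum : ∑ j ∈ Finset.univ.erase i, d j = (1 - x i) / x i := by
    rw [hdd, ← Finset.sum_div, Finset.sum_erase_eq_sub (Finset.mem_univ i), hx.2]
  rw [hsum]
  field_simp
  ring

lemma alg_aux {n : ℕ} (x y : Fin n → ℝ) (hx : memSimplex n x) (hy : memSimplex n y)
    (hδ : ∑ j, |x j - y j| < 1) :
    1 - ∑ j, |x j - y j| ≤
      ∑ i ∈ Finset.univ.filter (fun i => 0 < x i ∧ 0 < y i),
        1 / (1 + ∑ j ∈ Finset.univ.erase i, max (x j / x i) (y j / y i)) := by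
  classical
  set δ := ∑ j, |x j - y j| with hδdef
  have hδ0 : 0 ≤ δ := Finset.sum_nonneg fun j _ => abs_nonneg _
  set M := ∑ j, max (x j) (y j) with hMdef
  set m := ∑ j, min (x j) (y j) with hmdef
  have h1 : m + M = 2 := by
    rw [hmdef, hMdef, ← Finset.sum_add_distrib]
    rw [Finset.sum_congr rfl fun j _ => min_add_max (x j) (y j), Finset.sum_add_distrib,
      hx.2, hy.2]
    norm_num
  have h2 : M - m = δ := by
    rw [hMdef, hmdef, ← Finset.sum_sub_distrib, hδdef]
    exact Finset.sum_congr rfl fun j _ => (max_sub_min_eq_abs (x j) (y j)).trans (abs_sub_comm (y j) (x j))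
  have hM : M = 1 + δ / 2 := by linarith
  have hm : m = 1 - δ / 2 := by linarith
  have hMpos : (0:ℝ) < M := by linarith
  set S := Finset.univ.filter (fun i => 0 < x i ∧ 0 < y i) with hSdef
  have hterm : ∀ i ∈ S, min (x i) (y i) / M
      ≤ 1 / (1 + ∑ j ∈ Finset.univ.erase i, max (x j / x i) (y j / y i)) := by
    intro i hi
    obtain ⟨-, hxi, hyi⟩ : i ∈ Finset.univ ∧ 0 < x i ∧ 0 < y i := by
      simpa [hSdef] using hi
    have hci : 0 ≤ ∑ j ∈ Finset.univ.erase i, max (x j / x i) (y j / y i) :=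
      Finset.sum_nonneg fun j _ => le_trans (div_nonneg (hx.1 j).1 hxi.le) (le_max_left _ _)
    rw [div_le_div_iff₀ hMpos (by linarith)]
    have hmin0 : (0:ℝ) ≤ min (x i) (y i) := le_min hxi.le hyi.le
    have hjterm : ∀ j ∈ Finset.univ.erase i,
        min (x i) (y i) * max (x j / x i) (y j / y i) ≤ max (x j) (y j) := by
      intro j _
      rw [mul_max_of_nonneg _ _ hmin0]
      refine max_le_max ?_ ?_
      · calc min (x i) (y i) * (x j / x i) ≤ x i * (x j / x i) :=
              mul_le_mul_of_nonneg_right (min_le_left _ _) (div_nonneg (hx.1 j).1 hxi.le)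
          _ = x j := by field_simp
      · calc min (x i) (y i) * (y j / y i) ≤ y i * (y j / y i) :=
              mul_le_mul_of_nonneg_right (min_le_right _ _) (div_nonneg (hy.1 j).1 hyi.le)
          _ = y j := by field_simp
    calc min (x i) (y i) * (1 + ∑ j ∈ Finset.univ.erase i, max (x j / x i) (y j / y i))
        = min (x i) (y i)
          + ∑ j ∈ Finset.univ.erase i, min (x i) (y i) * max (x j / x i) (y j / y i) := by
          rw [mul_add, mul_one, Finset.mul_sum]
      _ ≤ max (x i) (y i) + ∑ j ∈ Finset.univ.erase i, max (x j) (y j) :=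
          add_le_add ((min_le_left _ _).trans (le_max_left _ _)) (Finset.sum_le_sum hjterm)
      _ = M := by
          rw [hMdef]
          exact Finset.add_sum_erase _ (fun j => max (x j) (y j)) (Finset.mem_univ i)
      _ = 1 * M := (one_mul M).symm
  have hSsum : ∑ i ∈ S, min (x i) (y i) = m := by
    rw [hmdef]
    refine Finset.sum_subset (Finset.subset_univ S) fun i _ hni => ?_
    simp only [hSdef, Finset.mem_filter, Finset.mem_univ, true_and, not_and, not_lt] at hni
    by_cases hxi : 0 < x i
    · have : y i = 0 := le_antisymm (hni hxi) (hy.1 i).1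
      simp [this, min_eq_right, (hx.1 i).1]
    · have : x i = 0 := le_antisymm (le_of_not_gt hxi) (hx.1 i).1
      simp [this, min_eq_left, (hy.1 i).1]
  calc 1 - δ ≤ m / M := by
        rw [hm, hM, le_div_iff₀ (by linarith : (0:ℝ) < 1 + δ / 2)]
        nlinarith [sq_nonneg δ]
    _ = (∑ i ∈ S, min (x i) (y i)) / M := by rw [hSsum]
    _ = ∑ i ∈ S, min (x i) (y i) / M := Finset.sum_div _ _ _
    _ ≤ _ := Finset.sum_le_sum hterm

lemma part2 (hmeas : ∀ i, Measurable (R i))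
    (hindep : iIndepFun R μ)
    (hexp : ∀ (i : Fin n) (t : ℝ), 0 ≤ t →
      μ {ω | R i ω ≤ t} = ENNReal.ofReal (1 - Real.exp (-t)))
    (x y : Fin n → ℝ) (hx : memSimplex n x) (hy : memSimplex n y) :
    ENNReal.ofReal (1 - ∑ j, |x j - y j|) ≤
      μ {ω | ∃ i : Fin n, 0 < x i ∧ 0 < y i ∧
        (∀ j : Fin n, j ≠ i → 0 < x j → R i ω / x i < R j ω / x j) ∧
        (∀ j : Fin n, j ≠ i → 0 < y j → R i ω / y i < R j ω / y j)} := by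
  classical
  by_cases hδ : 1 - (∑ j, |x j - y j|) ≤ 0
  · rw [ENNReal.ofReal_of_nonpos hδ]
    exact zero_le
  have hδ1 : ∑ j, |x j - y j| < 1 := by linarith [lt_of_not_ge hδ]
  set S := Finset.univ.filter (fun i => 0 < x i ∧ 0 < y i) with hSdef
  set F : Fin n → Set Ω := fun i =>
    {ω | 0 < R i ω ∧ ∀ j, j ≠ i → max (x j / x i) (y j / y i) * R i ω < R j ω} with hFdef
  have hFmeas : ∀ i, MeasurableSet (F i) := by
    intro i
    have hrw : F i = (R i ⁻¹' Set.Ioi 0) ∩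
        ⋂ j : Fin n, {ω | j ≠ i → max (x j / x i) (y j / y i) * R i ω < R j ω} := by
      ext ω; simp [hFdef, Set.mem_iInter]
    rw [hrw]
    refine (hmeas i measurableSet_Ioi).inter (MeasurableSet.iInter fun j => ?_)
    by_cases hj : j = i
    · have : {ω : Ω | j ≠ i → max (x j / x i) (y j / y i) * R i ω < R j ω} = Set.univ := by
        ext ω; simp [hj]
      rw [this]; exact MeasurableSet.univ
    · have : {ω : Ω | j ≠ i → max (x j / x i) (y j / y i) * R i ω < R j ω}
          = {ω : Ω | max (x j / x i) (y j / y i) * R i ω < R j ω} := by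
        ext ω; simp [hj]
      rw [this]
      exact measurableSet_lt ((hmeas i).const_mul _) (hmeas j)
  have hS_mem : ∀ i ∈ S, 0 < x i ∧ 0 < y i := by
    intro i hi; simpa [hSdef] using hi
  have hFμ : ∀ i ∈ S, μ (F i)
      = ENNReal.ofReal (1 / (1 + ∑ j ∈ Finset.univ.erase i, max (x j / x i) (y j / y i))) := by
    intro i hi
    obtain ⟨hxi, hyi⟩ := hS_mem i hi
    exact keyPos hmeas hindep hexp i _
      (fun j => le_trans (div_nonneg (hx.1 j).1 hxi.le) (le_max_left _ _))
  have hstep : ∀ (i j : Fin n), 0 < x i → 0 < x j → j ≠ i → (ω : Ω) → 0 < R i ω →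
      max (x j / x i) (y j / y i) * R i ω < R j ω → x j * R i ω < R j ω * x i := by
    intro i j hxi hxj hj ω hR hlt
    have h2 : x j / x i * R i ω ≤ max (x j / x i) (y j / y i) * R i ω :=
      mul_le_mul_of_nonneg_right (le_max_left _ _) hR.le
    exact hmul_aux hxi (lt_of_le_of_lt h2 hlt)
  have hstepy : ∀ (i j : Fin n), 0 < y i → 0 < y j → j ≠ i → (ω : Ω) → 0 < R i ω →
      max (x j / x i) (y j / y i) * R i ω < R j ω → y j * R i ω < R j ω * y i := by
    intro i j hyi hyj hj ω hR hlt
    have h2 : y j / y i * R i ω ≤ max (x j / x i) (y j / y i) * R i ω :=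
      mul_le_mul_of_nonneg_right (le_max_right _ _) hR.le
    exact hmul_aux hyi (lt_of_le_of_lt h2 hlt)
  have hFsub : ∀ i ∈ S, F i ⊆ {ω | ∃ i : Fin n, 0 < x i ∧ 0 < y i ∧
        (∀ j : Fin n, j ≠ i → 0 < x j → R i ω / x i < R j ω / x j) ∧
        (∀ j : Fin n, j ≠ i → 0 < y j → R i ω / y i < R j ω / y j)} := by
    intro i hi ω hω
    obtain ⟨hxi, hyi⟩ := hS_mem i hi
    obtain ⟨hR, hlt⟩ := hω
    refine ⟨i, hxi, hyi, fun j hj hxj => ?_, fun j hj hyj => ?_⟩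
    · have := hstep i j hxi hxj hj ω hR (hlt j hj)
      rw [div_lt_div_iff₀ hxi hxj]; linarith
    · have := hstepy i j hyi hyj hj ω hR (hlt j hj)
      rw [div_lt_div_iff₀ hyi hyj]; linarith
  have hdisj : Set.PairwiseDisjoint (↑S : Set (Fin n)) F := by
    intro i hi j hj hij
    obtain ⟨hxi, hyi⟩ := hS_mem i (by simpa using hi)
    obtain ⟨hxj, hyj⟩ := hS_mem j (by simpa using hj)
    refine Set.disjoint_left.mpr fun ω hωi hωj => ?_
    obtain ⟨hRi, hlti⟩ := hωi
    obtain ⟨hRj, hltj⟩ := hωj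
    have h1 := hstep i j hxi hxj (Ne.symm hij) ω hRi (hlti j (Ne.symm hij))
    have h2 := hstep j i hxj hxi hij ω hRj (hltj i hij)
    linarith
  calc ENNReal.ofReal (1 - ∑ j, |x j - y j|)
      ≤ ENNReal.ofReal (∑ i ∈ S,
          1 / (1 + ∑ j ∈ Finset.univ.erase i, max (x j / x i) (y j / y i))) :=
        ENNReal.ofReal_le_ofReal (alg_aux x y hx hy hδ1)
    _ = ∑ i ∈ S, ENNReal.ofReal
          (1 / (1 + ∑ j ∈ Finset.univ.erase i, max (x j / x i) (y j / y i))) := by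
        refine ENNReal.ofReal_sum_of_nonneg fun i hi => ?_
        obtain ⟨hxi, hyi⟩ := hS_mem i hi
        have hci : 0 ≤ ∑ j ∈ Finset.univ.erase i, max (x j / x i) (y j / y i) :=
          Finset.sum_nonneg fun j _ =>
            le_trans (div_nonneg (hx.1 j).1 hxi.le) (le_max_left _ _)
        positivity
    _ = ∑ i ∈ S, μ (F i) := Finset.sum_congr rfl fun i hi => (hFμ i hi).symm
    _ = μ (⋃ i ∈ S, F i) := (measure_biUnion_finset hdisj fun i _ => hFmeas i).symm
    _ ≤ _ := measure_mono (Set.iUnion₂_subset hFsub)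


/-- Let `R_1, …, R_n` be i.i.d. `Exp(1)` random variables (characterized by their CDF
`P[R_i ≤ t] = 1 − e^{−t}` for `t ≥ 0`). Then (i) for every `x ∈ Δ_n` and `i` with
`x_i > 0`, `P[R_i/x_i < R_j/x_j ∀ j ≠ i with x_j > 0] = x_i`; and (ii) for all
`x, y ∈ Δ_n`, the probability that some `i` with `x_i, y_i > 0` minimizes both
`R_j/x_j` and `R_j/y_j` (strictly) is at least `1 − ∑_j |x_j − y_j|`. -/
theorem statement16 (n : ℕ) (hn : 1 ≤ n)
    (Ω : Type) [MeasurableSpace Ω] (μ : Measure Ω) [IsProbabilityMeasure μ]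
    (R : Fin n → Ω → ℝ)
    (hmeas : ∀ i, Measurable (R i))
    (hindep : iIndepFun R μ)
    (hexp : ∀ (i : Fin n) (t : ℝ), 0 ≤ t →
      μ {ω | R i ω ≤ t} = ENNReal.ofReal (1 - Real.exp (-t))) :
    (∀ x : Fin n → ℝ, memSimplex n x → ∀ i : Fin n, 0 < x i →
      μ {ω | ∀ j : Fin n, j ≠ i → 0 < x j → R i ω / x i < R j ω / x j}
        = ENNReal.ofReal (x i)) ∧
    (∀ x y : Fin n → ℝ, memSimplex n x → memSimplex n y →
      ENNReal.ofReal (1 - ∑ j, |x j - y j|) ≤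
        μ {ω | ∃ i : Fin n, 0 < x i ∧ 0 < y i ∧
          (∀ j : Fin n, j ≠ i → 0 < x j → R i ω / x i < R j ω / x j) ∧
          (∀ j : Fin n, j ≠ i → 0 < y j → R i ω / y i < R j ω / y j)}) :=
  ⟨fun x hx i hxi => part1 hmeas hindep hexp x hx i hxi,
   fun x y hx hy => part2 hmeas hindep hexp x y hx hy⟩
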